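/- For θ ∈ ℝ, the vertical line L = {(x + i√3/2, √3 x) : x ∈ ℝ} ⊆ ℂ × ℝ is invariant under the Heisenberg translation T = I₂I₁ at θ = π/3; explicitly, the induced action of T on the Heisenberg group sends (x + i√3/2, √3 x) to ((x+2) + i√3/2, √3(x+2)). -/

import Mathlib

open Complex Matrix

noncomputable def I₁ (θ : ℝ) : Matrix (Fin 3) (Fin 3) ℂ :=
  !![-1, 2 * Complex.exp (θ * Complex.I), 2;
     0, 1, 2 * Complex.exp (-(θ * Complex.I));
     0, 0, -1]

noncomputable def I₂ (θ : ℝ) : Matrix (Fin 3) (Fin 3) ℂ :=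
  !![-1, -2 * Complex.exp (-(θ * Complex.I)), 2;
     0, 1, -2 * Complex.exp (θ * Complex.I);
     0, 0, -1]

noncomputable def I₃ : Matrix (Fin 3) (Fin 3) ℂ :=
  !![0, 0, 1;
     0, -1, 0;
     1, 0, 0]

/-- The standard lift of the Heisenberg point [z,t]. -/
noncomputable def lift (z : ℂ) (t : ℝ) : Fin 3 → ℂ :=
  ![(-((‖z‖ : ℝ) : ℂ) ^ 2 + (t : ℂ) * Complex.I) / 2, z, 1]

lemma exp_pi3 : Complex.exp ((Real.pi / 3 : ℝ) * Complex.I) = 1/2 + (Real.sqrt 3 / 2 : ℝ) * Complex.I := by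
  rw [Complex.exp_mul_I, ← Complex.ofReal_cos, ← Complex.ofReal_sin,
    Real.cos_pi_div_three, Real.sin_pi_div_three]
  push_cast; ring

lemma exp_neg_pi3 : Complex.exp (-((Real.pi / 3 : ℝ) * Complex.I)) = 1/2 - (Real.sqrt 3 / 2 : ℝ) * Complex.I := by
  have : -((Real.pi / 3 : ℝ) * Complex.I) = ((-(Real.pi / 3) : ℝ) : ℂ) * Complex.I := by push_cast; ring
  rw [this, Complex.exp_mul_I, ← Complex.ofReal_cos, ← Complex.ofReal_sin,
    Real.cos_neg, Real.sin_neg, Real.cos_pi_div_three, Real.sin_pi_div_three]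
  push_cast; ring

lemma sq_abs' (a b : ℝ) : ((‖(a:ℂ) + Complex.I * (b:ℝ)‖ : ℝ) : ℂ)^2 = (a:ℂ)^2 + (b:ℂ)^2 := by
  rw [mul_comm]
  rw [show ((‖(a:ℂ) + (b:ℂ) * Complex.I‖ : ℝ) : ℂ)^2 = ((‖(a:ℂ) + (b:ℂ) * Complex.I‖)^2 : ℝ) by push_cast; ring]
  rw [Complex.sq_norm, Complex.normSq_add_mul_I]
  push_cast; ring

lemma e1 : Complex.exp (Complex.I * (Real.pi:ℂ) * (1/3)) = 1/2 + (Real.sqrt 3 / 2 : ℝ) * Complex.I := by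
  rw [show Complex.I * (Real.pi:ℂ) * (1/3) = ((Real.pi/3 : ℝ):ℂ) * Complex.I by push_cast; ring]
  exact exp_pi3

lemma e2 : Complex.exp (Complex.I * (Real.pi:ℂ) * (-1/3)) = 1/2 - (Real.sqrt 3 / 2 : ℝ) * Complex.I := by
  rw [show Complex.I * (Real.pi:ℂ) * (-1/3) = -(((Real.pi/3 : ℝ):ℂ) * Complex.I) by push_cast; ring]
  exact exp_neg_pi3

lemma habs (a : ℝ) : ((‖(a:ℂ) + Complex.I * ((Real.sqrt 3 / 2 : ℝ):ℂ)‖ : ℝ) : ℂ)^2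
    = (a:ℂ)^2 + 3/4 := by
  rw [sq_abs' a (Real.sqrt 3 / 2)]
  have : ((Real.sqrt 3 / 2 : ℝ):ℂ)^2 = ((Real.sqrt 3 ^ 2 / 4 : ℝ):ℂ) := by push_cast; ring
  rw [this, Real.sq_sqrt (by norm_num : (0:ℝ) ≤ 3)]
  norm_num

theorem T_translates_invariant_R_circle (x : ℝ) :
    (I₂ (Real.pi / 3) * I₁ (Real.pi / 3)).mulVec
        (lift ((x : ℂ) + Complex.I * (Real.sqrt 3 / 2 : ℝ)) (Real.sqrt 3 * x)) =
      lift (((x + 2 : ℝ) : ℂ) + Complex.I * (Real.sqrt 3 / 2 : ℝ))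
        (Real.sqrt 3 * (x + 2)) := by
  have h3 : ((Real.sqrt 3 : ℝ) : ℂ)^2 = 3 := by
    rw [show ((Real.sqrt 3 : ℝ) : ℂ)^2 = ((Real.sqrt 3 ^ 2 : ℝ) : ℂ) by push_cast; ring,
      Real.sq_sqrt (by norm_num)]
    norm_num
  have ha := habs x
  have hb := habs (x + 2)
  funext i
  fin_cases i <;>
    simp [I₁, I₂, _root_.lift, mulVec, dotProduct, Fin.sum_univ_three]
  · rw [show ((Real.pi:ℂ) / 3 * Complex.I) = ((Real.pi / 3 : ℝ):ℂ) * Complex.I by push_cast; ring,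
      exp_pi3, exp_neg_pi3]
    push_cast at ha hb ⊢
    rw [ha, hb]
    linear_combination (-Complex.I ^ 2) * h3 + (-3 : ℂ) * Complex.I_sq
  · rw [show ((Real.pi:ℂ) / 3 * Complex.I) = ((Real.pi / 3 : ℝ):ℂ) * Complex.I by push_cast; ring,
      exp_pi3, exp_neg_pi3]
    ring
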